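/- Let d ≥ 1, let Ω ⊆ ℝ^d be a nonempty bounded open set, let ε > 0 and 0 < k ≤ 2ε², and fix w ∈ V. Then the standard Crank–Nicolson discrete energy E(u) = (1/2)∫_Ω |(∇u(x) + ∇w(x))/2|² dx + (1/(4k))∫_Ω (u(x) − w(x))² dx + (1/(4ε²))∫_Ω ( F(u(x)) + f(w(x))u(x) ) dx is strictly convex on V: for all u₁, u₂ ∈ V whose restrictions to Ω are not equal and all t ∈ (0,1), E(t u₁ + (1−t) u₂) < t E(u₁) + (1−t) E(u₂). -/

import Mathlib

open MeasureTheory Set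

theorem quartic_aux13 (a b t : ℝ) (hab : a ≠ b) (ht0 : 0 < t) (ht1 : t < 1) :
    (t*a + (1-t)*b)^4 < t*a^4 + (1-t)*b^4 := by
  set S := t*a^2 + (1-t)*b^2 with hSdef
  set D := t*(1-t)*(a-b)^2 with hDdef
  have hD : 0 < D := by
    have := sq_pos_of_ne_zero (sub_ne_zero.2 hab)
    have h1 : 0 < 1 - t := by linarith
    positivity
  have hm : (t*a+(1-t)*b)^2 = S - D := by rw [hSdef, hDdef]; ring
  have hSD : 0 ≤ S - D := hm ▸ sq_nonneg _
  have h4 : (t*a+(1-t)*b)^4 = (S-D)^2 := by rw [← hm]; ring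
  have hextra : t*a^4 + (1-t)*b^4 = S^2 + t*(1-t)*(a^2-b^2)^2 := by rw [hSdef]; ring
  have hx : 0 ≤ t*(1-t)*(a^2-b^2)^2 := by
    have h1 : 0 < 1 - t := by linarith
    positivity
  nlinarith [mul_nonneg hSD hD.le, mul_pos (lt_of_lt_of_le (c := D) hD (by linarith)) hD]

theorem scalar_strict13 (k ε wv c a b t : ℝ) (hε : 0 < ε) (hk0 : 0 < k) (hk : k ≤ 2*ε^2)
    (hab : a ≠ b) (ht0 : 0 < t) (ht1 : t < 1) :
    1/(4*k)*(t*a+(1-t)*b - wv)^2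
      + 1/(4*ε^2)*(1/4*((t*a+(1-t)*b)^2-1)^2 + c*(t*a+(1-t)*b))
    < t*(1/(4*k)*(a-wv)^2 + 1/(4*ε^2)*(1/4*(a^2-1)^2 + c*a))
      + (1-t)*(1/(4*k)*(b-wv)^2 + 1/(4*ε^2)*(1/4*(b^2-1)^2 + c*b)) := by
  have hk' : (k:ℝ) ≠ 0 := hk0.ne'
  have hε' : (ε:ℝ) ≠ 0 := hε.ne'
  have hid : t*(1/(4*k)*(a-wv)^2 + 1/(4*ε^2)*(1/4*(a^2-1)^2 + c*a))
      + (1-t)*(1/(4*k)*(b-wv)^2 + 1/(4*ε^2)*(1/4*(b^2-1)^2 + c*b))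
      - (1/(4*k)*(t*a+(1-t)*b - wv)^2
      + 1/(4*ε^2)*(1/4*((t*a+(1-t)*b)^2-1)^2 + c*(t*a+(1-t)*b)))
      = (1/(4*k) - 1/(8*ε^2))*(t*(1-t)*(a-b)^2)
        + (1/(16*ε^2))*(t*a^4+(1-t)*b^4 - (t*a+(1-t)*b)^4) := by
    field_simp
    ring
  have h1 : 0 ≤ (1/(4*k) - 1/(8*ε^2)) := by
    have h0 : (4:ℝ)*k ≤ 8*ε^2 := by linarith
    have h2 : (0:ℝ) < 4*k := by linarith
    have := one_div_le_one_div_of_le h2 h0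
    linarith
  have h2 : 0 ≤ t*(1-t)*(a-b)^2 := by
    have : 0 < 1 - t := by linarith
    positivity
  have h3 : 0 < t*a^4+(1-t)*b^4 - (t*a+(1-t)*b)^4 :=
    sub_pos.2 (quartic_aux13 a b t hab ht0 ht1)
  have h4 : 0 < (1/(16*ε^2)) := by positivity
  nlinarith [mul_nonneg h1 h2, mul_pos h4 h3]

theorem norm_sq_combo13 {F : Type*} [NormedAddCommGroup F] [NormedSpace ℝ F] (v₁ v₂ : F)
    (t : ℝ) (ht0 : 0 ≤ t) (ht1 : t ≤ 1) :
    ‖t • v₁ + (1-t) • v₂‖^2 ≤ t*‖v₁‖^2 + (1-t)*‖v₂‖^2 := by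
  have h1t : (0:ℝ) ≤ 1 - t := by linarith
  have h := norm_add_le (t • v₁) ((1-t) • v₂)
  rw [norm_smul, norm_smul, Real.norm_eq_abs, Real.norm_eq_abs, abs_of_nonneg ht0,
    abs_of_nonneg h1t] at h
  have h2 : ‖t • v₁ + (1-t) • v₂‖^2 ≤ (t*‖v₁‖ + (1-t)*‖v₂‖)^2 :=
    pow_le_pow_left₀ (norm_nonneg _) h 2
  nlinarith [mul_nonneg (mul_nonneg ht0 h1t) (sq_nonneg (‖v₁‖ - ‖v₂‖))]

theorem gradient_combo13 {d : ℕ} (u₁ u₂ : EuclideanSpace ℝ (Fin d) → ℝ)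
    (h1 : Differentiable ℝ u₁) (h2 : Differentiable ℝ u₂) (t s : ℝ)
    (x : EuclideanSpace ℝ (Fin d)) :
    gradient (fun y => t * u₁ y + s * u₂ y) x = t • gradient u₁ x + s • gradient u₂ x := by
  unfold gradient
  rw [fderiv_fun_add ((h1 x).const_mul t) ((h2 x).const_mul s), fderiv_const_mul (h1 x) t,
    fderiv_const_mul (h2 x) s, map_add, _root_.map_smul, _root_.map_smul]

theorem gradient_continuous13 {d : ℕ} {u : EuclideanSpace ℝ (Fin d) → ℝ}
    (hu : ContDiff ℝ 1 u) : Continuous (gradient u) := by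
  have h := hu.continuous_fderiv one_ne_zero
  exact (InnerProductSpace.toDual ℝ (EuclideanSpace ℝ (Fin d))).symm.continuous.comp h

/-- Pointwise integrand of the Crank–Nicolson discrete energy. -/
noncomputable def P13 {d : ℕ} (k ε : ℝ) (w u : EuclideanSpace ℝ (Fin d) → ℝ)
    (x : EuclideanSpace ℝ (Fin d)) : ℝ :=
  1 / 2 * ‖(1 / 2 : ℝ) • (gradient u x + gradient w x)‖ ^ 2
    + 1 / (4 * k) * (u x - w x) ^ 2
    + 1 / (4 * ε ^ 2) * (1 / 4 * ((u x) ^ 2 - 1) ^ 2 + ((w x) ^ 3 - w x) * u x)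

/-- Convexity part of Theorem 4.1: the standard Crank–Nicolson discrete energy for
the Allen–Cahn equation is strictly convex when `0 < k ≤ 2ε²`. -/
theorem stmt_13 (d : ℕ) (hd : 1 ≤ d)
    (Ω : Set (EuclideanSpace ℝ (Fin d))) (hΩne : Ω.Nonempty)
    (hΩbd : Bornology.IsBounded Ω) (hΩop : IsOpen Ω)
    (ε k : ℝ) (hε : 0 < ε) (hk0 : 0 < k) (hk : k ≤ 2 * ε ^ 2)
    (w : EuclideanSpace ℝ (Fin d) → ℝ) (hw : ContDiff ℝ 1 w)
    (E : (EuclideanSpace ℝ (Fin d) → ℝ) → ℝ)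
    (hE : ∀ u, E u =
      1 / 2 * (∫ x in Ω, ‖(1 / 2 : ℝ) • (gradient u x + gradient w x)‖ ^ 2)
      + 1 / (4 * k) * (∫ x in Ω, (u x - w x) ^ 2)
      + 1 / (4 * ε ^ 2) * (∫ x in Ω,
          (1 / 4 * ((u x) ^ 2 - 1) ^ 2 + ((w x) ^ 3 - w x) * u x)))
    (u₁ u₂ : EuclideanSpace ℝ (Fin d) → ℝ)
    (hu₁ : ContDiff ℝ 1 u₁) (hu₂ : ContDiff ℝ 1 u₂)
    (hne : ¬ Set.EqOn u₁ u₂ Ω)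
    (t : ℝ) (ht : t ∈ Set.Ioo (0 : ℝ) 1) :
    E (fun x => t * u₁ x + (1 - t) * u₂ x) < t * E u₁ + (1 - t) * E u₂ := by
  obtain ⟨ht0, ht1⟩ := ht
  have hgw := gradient_continuous13 hw
  have hcw := hw.continuous
  -- integrability of continuous functions on Ω
  have hKcl : IsCompact (closure Ω) := hΩbd.isCompact_closure
  have intc : ∀ g : EuclideanSpace ℝ (Fin d) → ℝ, Continuous g → IntegrableOn g Ω := by
    intro g hg
    exact (hg.continuousOn.integrableOn_compact hKcl).mono_set subset_closure
  -- the combination function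
  set m : EuclideanSpace ℝ (Fin d) → ℝ := fun x => t * u₁ x + (1 - t) * u₂ x with hmdef
  have hm : ContDiff ℝ 1 m := (contDiff_const.mul hu₁).add (contDiff_const.mul hu₂)
  -- E agrees with the integral of P13
  have hEP : ∀ u : EuclideanSpace ℝ (Fin d) → ℝ, ContDiff ℝ 1 u →
      E u = ∫ x in Ω, P13 k ε w u x := by
    intro u hu
    have hgu := gradient_continuous13 hu
    have hcu := hu.continuous
    have i1 : IntegrableOn (fun x => ‖(1/2:ℝ) • (gradient u x + gradient w x)‖^2) Ω :=
      intc _ (((continuous_const (y := (1/2:ℝ)).smul (hgu.add hgw)).norm).pow 2)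
    have i2 : IntegrableOn (fun x => (u x - w x)^2) Ω := intc _ ((hcu.sub hcw).pow 2)
    have i3 : IntegrableOn
        (fun x => 1/4*((u x)^2-1)^2 + ((w x)^3 - w x)*u x) Ω :=
      intc _ ((continuous_const.mul (((hcu.pow 2).sub continuous_const).pow 2)).add
        (((hcw.pow 3).sub hcw).mul hcu))
    have i12 : Integrable (fun x => 1/2 * ‖(1/2:ℝ) • (gradient u x + gradient w x)‖^2
        + 1/(4*k) * (u x - w x)^2) (volume.restrict Ω) :=
      (i1.const_mul _).add (i2.const_mul _)
    rw [hE u, ← integral_const_mul, ← integral_const_mul, ← integral_const_mul,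
      ← integral_add (i1.const_mul _) (i2.const_mul _),
      ← integral_add i12 (i3.const_mul _)]
    rfl
  -- continuity & integrability of P13
  have contP : ∀ u : EuclideanSpace ℝ (Fin d) → ℝ, ContDiff ℝ 1 u →
      Continuous (P13 k ε w u) := by
    intro u hu
    have hgu := gradient_continuous13 hu
    have hcu := hu.continuous
    exact ((continuous_const.mul (((continuous_const (y := (1/2:ℝ)).smul (hgu.add hgw)).norm).pow 2)).add
      (continuous_const.mul ((hcu.sub hcw).pow 2))).add
      (continuous_const.mul ((continuous_const.mul
        (((hcu.pow 2).sub continuous_const).pow 2)).add (((hcw.pow 3).sub hcw).mul hcu)))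
  have iP1 : IntegrableOn (P13 k ε w u₁) Ω := intc _ (contP u₁ hu₁)
  have iP2 : IntegrableOn (P13 k ε w u₂) Ω := intc _ (contP u₂ hu₂)
  have iPm : IntegrableOn (P13 k ε w m) Ω := intc _ (contP m hm)
  -- pointwise convexity of the gradient term
  have hgradm : ∀ x, gradient m x = t • gradient u₁ x + (1-t) • gradient u₂ x :=
    gradient_combo13 u₁ u₂ (hu₁.differentiable one_ne_zero) (hu₂.differentiable one_ne_zero) t (1-t)
  have hv : ∀ x, ‖(1/2:ℝ) • (gradient m x + gradient w x)‖^2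
      ≤ t*‖(1/2:ℝ) • (gradient u₁ x + gradient w x)‖^2
        + (1-t)*‖(1/2:ℝ) • (gradient u₂ x + gradient w x)‖^2 := by
    intro x
    have hrw : (1/2:ℝ) • (gradient m x + gradient w x)
        = t • ((1/2:ℝ) • (gradient u₁ x + gradient w x))
          + (1-t) • ((1/2:ℝ) • (gradient u₂ x + gradient w x)) := by
      rw [hgradm x]; module
    rw [hrw]
    exact norm_sq_combo13 _ _ t ht0.le ht1.le
  -- pointwise convexity (with strictness off the diagonal) of the scalar term
  have hsc : ∀ x, u₁ x ≠ u₂ x →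
      1/(4*k)*(m x - w x)^2 + 1/(4*ε^2)*(1/4*((m x)^2-1)^2 + ((w x)^3 - w x)*(m x))
      < t*(1/(4*k)*(u₁ x - w x)^2 + 1/(4*ε^2)*(1/4*((u₁ x)^2-1)^2 + ((w x)^3 - w x)*(u₁ x)))
        + (1-t)*(1/(4*k)*(u₂ x - w x)^2
          + 1/(4*ε^2)*(1/4*((u₂ x)^2-1)^2 + ((w x)^3 - w x)*(u₂ x))) := by
    intro x hx
    exact scalar_strict13 k ε (w x) ((w x)^3 - w x) (u₁ x) (u₂ x) t hε hk0 hk hx ht0 ht1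
  have hscle : ∀ x,
      1/(4*k)*(m x - w x)^2 + 1/(4*ε^2)*(1/4*((m x)^2-1)^2 + ((w x)^3 - w x)*(m x))
      ≤ t*(1/(4*k)*(u₁ x - w x)^2 + 1/(4*ε^2)*(1/4*((u₁ x)^2-1)^2 + ((w x)^3 - w x)*(u₁ x)))
        + (1-t)*(1/(4*k)*(u₂ x - w x)^2
          + 1/(4*ε^2)*(1/4*((u₂ x)^2-1)^2 + ((w x)^3 - w x)*(u₂ x))) := by
    intro x
    by_cases hx : u₁ x = u₂ x
    · have hmx : m x = u₂ x := by simp only [hmdef, hx]; ring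
      rw [hmx, hx]
      apply le_of_eq
      ring
    · exact (hsc x hx).le
  have hle : ∀ x, P13 k ε w m x ≤ t * P13 k ε w u₁ x + (1-t) * P13 k ε w u₂ x := by
    intro x
    have h1 := hv x
    have h2 := hscle x
    unfold P13
    linarith
  have hlt : ∀ x, u₁ x ≠ u₂ x →
      P13 k ε w m x < t * P13 k ε w u₁ x + (1-t) * P13 k ε w u₂ x := by
    intro x hx
    have h1 := hv x
    have h2 := hsc x hx
    unfold P13
    linarith
  -- positivity of the integral of the difference
  have hint : IntegrableOn
      (fun x => t * P13 k ε w u₁ x + (1-t) * P13 k ε w u₂ x - P13 k ε w m x) Ω :=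
    ((iP1.const_mul t).add (iP2.const_mul (1-t))).sub iPm
  have hnn : 0 ≤ᵐ[volume.restrict Ω]
      fun x => t * P13 k ε w u₁ x + (1-t) * P13 k ε w u₂ x - P13 k ε w m x :=
    ae_of_all _ fun x => by have := hle x; simp only [Pi.zero_apply]; linarith
  obtain ⟨x₀, hx₀, hnex⟩ : ∃ x ∈ Ω, u₁ x ≠ u₂ x := by
    by_contra h
    push_neg at h
    exact hne fun x hx => h x hx
  have hUopen : IsOpen (Ω ∩ {x | u₁ x ≠ u₂ x}) :=
    hΩop.inter (isOpen_ne_fun hu₁.continuous hu₂.continuous)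
  have hUpos : 0 < volume (Ω ∩ {x | u₁ x ≠ u₂ x}) :=
    hUopen.measure_pos volume ⟨x₀, hx₀, hnex⟩
  have hsub : Ω ∩ {x | u₁ x ≠ u₂ x} ⊆
      Function.support (fun x => t * P13 k ε w u₁ x + (1-t) * P13 k ε w u₂ x - P13 k ε w m x)
        ∩ Ω := by
    rintro x ⟨hxΩ, hxne⟩
    refine ⟨?_, hxΩ⟩
    have := hlt x hxne
    simp only [Function.mem_support]
    intro h0
    nlinarith [this]
  have hpos : 0 < ∫ x in Ω,
      (t * P13 k ε w u₁ x + (1-t) * P13 k ε w u₂ x - P13 k ε w m x) := by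
    rw [setIntegral_pos_iff_support_of_nonneg_ae hnn hint]
    exact lt_of_lt_of_le hUpos (measure_mono hsub)
  -- assemble
  have hsplit : ∫ x in Ω,
      (t * P13 k ε w u₁ x + (1-t) * P13 k ε w u₂ x - P13 k ε w m x)
      = (∫ x in Ω, (t * P13 k ε w u₁ x + (1-t) * P13 k ε w u₂ x)) - ∫ x in Ω, P13 k ε w m x :=
    integral_sub ((iP1.const_mul t).add (iP2.const_mul (1-t))) iPm
  have hsplit2 : ∫ x in Ω, (t * P13 k ε w u₁ x + (1-t) * P13 k ε w u₂ x)
      = t * (∫ x in Ω, P13 k ε w u₁ x) + (1-t) * ∫ x in Ω, P13 k ε w u₂ x := by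
    rw [integral_add (iP1.const_mul t) (iP2.const_mul (1-t)), integral_const_mul,
      integral_const_mul]
  rw [hEP m hm, hEP u₁ hu₁, hEP u₂ hu₂]
  rw [hsplit, hsplit2] at hpos
  linarith
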